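/- Uniqueness of √2/2-approximation (the error threshold ε < √2/2 of Theorem 3): for every n : ℕ, every continuous linear operator U : H_n →L[ℂ] H_n, and all f, g : (Fin n → Bool) → Bool, if ‖U − T_f‖ < √2/2 and ‖U − T_g‖ < √2/2 in operator norm, then f = g. Hence any single operator can approximate the oracle of at most one Boolean function within error less than √2/2. -/

import Mathlib

/-- The oracle operator `T_f` on `H_n = EuclideanSpace ℂ ((Fin n → Bool) × Bool)`,
given coordinatewise by `(T_f v) (x, c) = v (x, c ⊕ f x)`; it models the quantum
oracle `|x⟩|c⟩ ↦ |x⟩|c ⊕ f(x)⟩`. -/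
noncomputable def oracleOp (n : ℕ) (f : (Fin n → Bool) → Bool) :
    EuclideanSpace ℂ ((Fin n → Bool) × Bool) →L[ℂ]
      EuclideanSpace ℂ ((Fin n → Bool) × Bool) :=
  LinearMap.toContinuousLinearMap
    { toFun := fun v => WithLp.toLp 2 (fun p : (Fin n → Bool) × Bool => v (p.1, xor p.2 (f p.1)))
      map_add' := fun _ _ => rfl
      map_smul' := fun _ _ => rfl }

lemma oracleOp_single (n : ℕ) (f : (Fin n → Bool) → Bool) (x : Fin n → Bool) :
    oracleOp n f (EuclideanSpace.single (x, false) (1:ℂ)) =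
      EuclideanSpace.single (x, f x) (1:ℂ) := by
  ext p
  show EuclideanSpace.single (x, false) (1:ℂ) (p.1, xor p.2 (f p.1)) = _
  simp only [EuclideanSpace.single_apply, Prod.mk.injEq, Prod.ext_iff]
  obtain ⟨p1, p2⟩ := p
  by_cases h : p1 = x
  · subst h
    cases p2 <;> cases hh : f p1 <;> simp [hh]
  · simp [h]

lemma norm_single_sub (n : ℕ) (a b : (Fin n → Bool) × Bool) (hab : a ≠ b) :
    ‖EuclideanSpace.single a (1:ℂ) - EuclideanSpace.single b (1:ℂ)‖ = Real.sqrt 2 := by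
  rw [EuclideanSpace.norm_eq]
  congr 1
  rw [show (2:ℝ) = ∑ i ∈ ({a, b} : Finset ((Fin n → Bool) × Bool)), (1:ℝ) by
    rw [Finset.sum_const, Finset.card_pair hab]; norm_num]
  rw [← Finset.sum_subset (Finset.subset_univ {a,b})]
  · apply Finset.sum_congr rfl
    intro i hi
    simp only [Finset.mem_insert, Finset.mem_singleton] at hi
    rcases hi with rfl | rfl <;>
      simp [EuclideanSpace.single_apply, PiLp.sub_apply, hab, hab.symm]
  · intro i _ hi
    simp only [Finset.mem_insert, Finset.mem_singleton, not_or] at hi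
    simp [EuclideanSpace.single_apply, PiLp.sub_apply, hi.1, hi.2]

/-- Uniqueness of √2/2-approximation: a single operator can approximate the
oracle of at most one Boolean function to within operator-norm error < √2/2. -/
theorem oracleOp_approx_unique (n : ℕ)
    (U : EuclideanSpace ℂ ((Fin n → Bool) × Bool) →L[ℂ]
      EuclideanSpace ℂ ((Fin n → Bool) × Bool))
    (f g : (Fin n → Bool) → Bool)
    (hf : ‖U - oracleOp n f‖ < Real.sqrt 2 / 2)
    (hg : ‖U - oracleOp n g‖ < Real.sqrt 2 / 2) : f = g := by
  by_contra hne
  obtain ⟨x, hx⟩ := Function.ne_iff.mp hne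
  set v := EuclideanSpace.single (x, false) (1:ℂ) with hv
  have hvn : ‖v‖ = 1 := by
    simp [hv, EuclideanSpace.norm_single]
  have hfg : ‖oracleOp n f - oracleOp n g‖ ≥ Real.sqrt 2 := by
    have h1 : ‖(oracleOp n f - oracleOp n g) v‖ = Real.sqrt 2 := by
      rw [ContinuousLinearMap.sub_apply, oracleOp_single, oracleOp_single]
      exact norm_single_sub n _ _ (by simp [hx])
    have h2 := (oracleOp n f - oracleOp n g).le_opNorm v
    rw [h1, hvn, mul_one] at h2
    exact h2
  have htri : ‖oracleOp n f - oracleOp n g‖ ≤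
      ‖U - oracleOp n f‖ + ‖U - oracleOp n g‖ := by
    calc ‖oracleOp n f - oracleOp n g‖
        = ‖(oracleOp n f - U) + (U - oracleOp n g)‖ := by rw [sub_add_sub_cancel]
      _ ≤ ‖oracleOp n f - U‖ + ‖U - oracleOp n g‖ := norm_add_le _ _
      _ = ‖U - oracleOp n f‖ + ‖U - oracleOp n g‖ := by rw [norm_sub_rev]
  linarith [hfg, htri, hf, hg]
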